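/- arXiv:1109.4698 — 3 statements merged into one kernel-verified Lean document; each statement's English description precedes it below -/
import Mathlib

section
/- Let n ≥ 2 and let i be an integer with 0 ≤ i < n/2. The two-dimensional subspace of Symⁿρ spanned by v_i and v_{n−i} is stable under ρ(g) for all g ∈ G, and as a representation of G it is isomorphic to (Ind_H^G η^{n−2i}) ⊗ (θ·det ρ)^{i}. -/
open Matrix MvPolynomial
open scoped Classical

/-- Extension of a character `η : H →* Kˣ` to all of `G`, by zero outside `H`. -/
noncomputable def etaExt {K : Type*} [Field K] {G : Type*} [Group G]
    (H : Subgroup G) (η : H →* Kˣ) (g : G) : K :=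
  if h : g ∈ H then ((η ⟨g, h⟩ : Kˣ) : K) else 0

/-- The matrix model of the induced representation `Ind_H^G η'` (for any
character `η'` of `H`). -/
noncomputable def indRep {K : Type*} [Field K] {G : Type*} [Group G]
    (H : Subgroup G) (η : H →* Kˣ) (τ : G) (g : G) : Matrix (Fin 2) (Fin 2) K :=
  if g ∈ H then
    !![etaExt H η g, 0; 0, etaExt H η (τ * g * τ⁻¹)]
  else
    !![0, etaExt H η (g * τ⁻¹); etaExt H η (τ * g), 0]

/-- The substitution action of a 2×2 matrix on polynomials in `x = X 0`,
`y = X 1`, realizing the symmetric powers on homogeneous polynomials. -/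
noncomputable def symAct {K : Type*} [Field K] (A : Matrix (Fin 2) (Fin 2) K) :
    MvPolynomial (Fin 2) K →ₐ[K] MvPolynomial (Fin 2) K :=
  MvPolynomial.aeval (fun i => ∑ j, MvPolynomial.C (A j i) * MvPolynomial.X j)

/-- The character `θ · det ρ`, equal to `η(g)η(τgτ⁻¹)` on `H` and
`η(τg)η(gτ⁻¹)` off `H`. -/
noncomputable def thetaDet {K : Type*} [Field K] {G : Type*} [Group G]
    (H : Subgroup G) (η : H →* Kˣ) (τ : G) (g : G) : K :=
  if g ∈ H then etaExt H η g * etaExt H η (τ * g * τ⁻¹)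
  else etaExt H η (τ * g) * etaExt H η (g * τ⁻¹)

lemma symAct_apply_mono {K : Type*} [Field K] (A : Matrix (Fin 2) (Fin 2) K) (a b : ℕ) :
    symAct A (X 0 ^ a * X 1 ^ b)
      = (C (A 0 0) * X 0 + C (A 1 0) * X 1) ^ a *
        (C (A 0 1) * X 0 + C (A 1 1) * X 1) ^ b := by
  simp [symAct, Fin.sum_univ_two]

lemma etaExt_pow_of_mem {K : Type*} [Field K] {G : Type*} [Group G]
    (H : Subgroup G) (η : H →* Kˣ) (m : ℕ) {g : G} (hg : g ∈ H) :
    etaExt H (η ^ m) g = etaExt H η g ^ m := by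
  simp [etaExt, hg]

lemma symPow_plane_eqs
    {K : Type*} [Field K] {G : Type*} [Group G]
    (H : Subgroup G) (hH : H.index = 2) (τ : G) (hτ : τ ∉ H) (η : H →* Kˣ)
    (n : ℕ) (i : ℕ) (hi : 2 * i < n) (g : G) :
      (symAct (indRep H η τ g) (X 0 ^ (n - i) * X 1 ^ i) =
        C (thetaDet H η τ g ^ i) *
          (C (indRep H (η ^ (n - 2 * i)) τ g 0 0) * (X 0 ^ (n - i) * X 1 ^ i) +
           C (indRep H (η ^ (n - 2 * i)) τ g 1 0) * (X 0 ^ i * X 1 ^ (n - i)))) ∧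
      (symAct (indRep H η τ g) (X 0 ^ i * X 1 ^ (n - i)) =
        C (thetaDet H η τ g ^ i) *
          (C (indRep H (η ^ (n - 2 * i)) τ g 0 1) * (X 0 ^ (n - i) * X 1 ^ i) +
           C (indRep H (η ^ (n - 2 * i)) τ g 1 1) * (X 0 ^ i * X 1 ^ (n - i)))) := by
  by_cases hg : g ∈ H
  · have hconj : τ * g * τ⁻¹ ∈ H := by
      rw [Subgroup.mul_mem_iff_of_index_two hH]
      simp [Subgroup.mul_mem_iff_of_index_two hH, hτ, hg, inv_mem_iff (x := τ)]
    set a := etaExt H η g with ha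
    set b := etaExt H η (τ * g * τ⁻¹) with hb
    have hmat : indRep H η τ g = !![a, 0; 0, b] := by simp [indRep, hg, ha, hb]
    have hmat2 : indRep H (η ^ (n - 2 * i)) τ g
        = !![a ^ (n - 2 * i), 0; 0, b ^ (n - 2 * i)] := by
      simp [indRep, hg, etaExt_pow_of_mem H η _ hg, etaExt_pow_of_mem H η _ hconj, ha, hb]
    have htd : thetaDet H η τ g = a * b := by simp [thetaDet, hg, ha, hb]
    rw [hmat, hmat2, htd, symAct_apply_mono, symAct_apply_mono]
    have e1 : n - i = (n - 2 * i) + i := by omega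
    constructor <;>
    · simp only [Matrix.cons_val', Matrix.cons_val_zero, Matrix.cons_val_one,
        Matrix.head_cons, Matrix.head_fin_const, Matrix.cons_val_fin_one,
        Matrix.empty_val', Matrix.of_apply, map_zero, zero_mul, add_zero, zero_add,
        C_pow, C_mul, mul_pow, e1]
      ring
  · have hτg : τ * g ∈ H := by
      rw [Subgroup.mul_mem_iff_of_index_two hH]; simp [hτ, hg]
    have hgτ : g * τ⁻¹ ∈ H := by
      rw [Subgroup.mul_mem_iff_of_index_two hH]
      simp [hτ, hg, inv_mem_iff (x := τ)]
    set c := etaExt H η (g * τ⁻¹) with hc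
    set d := etaExt H η (τ * g) with hd
    have hmat : indRep H η τ g = !![0, c; d, 0] := by simp [indRep, hg, hc, hd]
    have hmat2 : indRep H (η ^ (n - 2 * i)) τ g
        = !![0, c ^ (n - 2 * i); d ^ (n - 2 * i), 0] := by
      simp [indRep, hg, etaExt_pow_of_mem H η _ hτg, etaExt_pow_of_mem H η _ hgτ, hc, hd]
    have htd : thetaDet H η τ g = d * c := by simp [thetaDet, hg, hc, hd]
    rw [hmat, hmat2, htd, symAct_apply_mono, symAct_apply_mono]
    have e1 : n - i = (n - 2 * i) + i := by omega
    constructor <;>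
    · simp only [Matrix.cons_val', Matrix.cons_val_zero, Matrix.cons_val_one,
        Matrix.head_cons, Matrix.head_fin_const, Matrix.cons_val_fin_one,
        Matrix.empty_val', Matrix.of_apply, map_zero, zero_mul, add_zero, zero_add,
        C_pow, C_mul, mul_pow, e1]
      ring

lemma comb_mem_span {K : Type*} [Field K] (α β γ : K)
    (v w : MvPolynomial (Fin 2) K) :
    C α * (C β * v + C γ * w) ∈
      Submodule.span K ({v, w} : Set (MvPolynomial (Fin 2) K)) := by
  rw [← smul_eq_C_mul, ← smul_eq_C_mul, ← smul_eq_C_mul]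
  exact Submodule.smul_mem _ _ (Submodule.add_mem _
    (Submodule.smul_mem _ _ (Submodule.subset_span (Set.mem_insert _ _)))
    (Submodule.smul_mem _ _ (Submodule.subset_span
      (Set.mem_insert_of_mem _ rfl))))

/-- for `0 ≤ i < n/2`, the plane spanned by `v i = x^(n-i) y^i`
and `v (n-i) = x^i y^(n-i)` in `Symⁿρ` is `G`-stable, and via the basis
`(v i, v (n-i)) ↔ (e₀, e₁)` it is isomorphic to
`(Ind_H^G η^(n-2i)) ⊗ (θ·det ρ)^i`. -/
theorem symPow_plane_summand
    {K : Type*} [Field K] [CharZero K] {G : Type*} [Group G]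
    (H : Subgroup G) (hH : H.index = 2) (τ : G) (hτ : τ ∉ H) (η : H →* Kˣ)
    (n : ℕ) (hn : 2 ≤ n) (i : ℕ) (hi : 2 * i < n) :
    ∀ g : G,
      (symAct (indRep H η τ g) (X 0 ^ (n - i) * X 1 ^ i) ∈
        Submodule.span K
          ({X 0 ^ (n - i) * X 1 ^ i, X 0 ^ i * X 1 ^ (n - i)} :
            Set (MvPolynomial (Fin 2) K))) ∧
      (symAct (indRep H η τ g) (X 0 ^ i * X 1 ^ (n - i)) ∈
        Submodule.span K
          ({X 0 ^ (n - i) * X 1 ^ i, X 0 ^ i * X 1 ^ (n - i)} :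
            Set (MvPolynomial (Fin 2) K))) ∧
      (symAct (indRep H η τ g) (X 0 ^ (n - i) * X 1 ^ i) =
        C (thetaDet H η τ g ^ i) *
          (C (indRep H (η ^ (n - 2 * i)) τ g 0 0) * (X 0 ^ (n - i) * X 1 ^ i) +
           C (indRep H (η ^ (n - 2 * i)) τ g 1 0) * (X 0 ^ i * X 1 ^ (n - i)))) ∧
      (symAct (indRep H η τ g) (X 0 ^ i * X 1 ^ (n - i)) =
        C (thetaDet H η τ g ^ i) *
          (C (indRep H (η ^ (n - 2 * i)) τ g 0 1) * (X 0 ^ (n - i) * X 1 ^ i) +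
           C (indRep H (η ^ (n - 2 * i)) τ g 1 1) * (X 0 ^ i * X 1 ^ (n - i)))) := by
  intro g
  obtain ⟨h1, h2⟩ := symPow_plane_eqs H hH τ hτ η n i hi g
  exact ⟨h1 ▸ comb_mem_span _ _ _ _ _, h2 ▸ comb_mem_span _ _ _ _ _, h1, h2⟩
end

section
/- Let n = 2m with m ≥ 1, and set ρ_n := (Symⁿρ) ⊗ (det ρ)^{−m}. Then there is an isomorphism of representations of G: ρ_n ≅ θ^m ⊕ ⨁_{i=0}^{m−1} (Ind_H^G η^{2(m−i)}) ⊗ θ^{i}·(det ρ)^{i−m}. -/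
open Matrix MvPolynomial
open scoped Classical

/-- The quadratic character `θ` attached to `H`: `1` on `H` and `-1` off `H`. -/
noncomputable def thetaChar {K : Type*} [Field K] {G : Type*} [Group G]
    (H : Subgroup G) (g : G) : K :=
  if g ∈ H then 1 else -1

/-- Auxiliary: `symAct` of a diagonal matrix on a monomial. -/
lemma symAct_diag {K : Type*} [Field K] (a b : K) (A : Matrix (Fin 2) (Fin 2) K)
    (hA : A = !![a, 0; 0, b]) (p q : ℕ) :
    symAct A ((X 0 : MvPolynomial (Fin 2) K) ^ p * X 1 ^ q) =
      C (a ^ p * b ^ q) * (X 0 ^ p * X 1 ^ q) := by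
  subst hA
  rw [symAct, _root_.map_mul, map_pow, map_pow, aeval_X, aeval_X, Fin.sum_univ_two,
    Fin.sum_univ_two]
  norm_num [Matrix.cons_val_zero, Matrix.cons_val_one, Matrix.head_cons]
  rw [mul_pow, mul_pow]
  ring

/-- Auxiliary: `symAct` of an antidiagonal matrix on a monomial. -/
lemma symAct_antidiag {K : Type*} [Field K] (c d : K) (A : Matrix (Fin 2) (Fin 2) K)
    (hA : A = !![0, c; d, 0]) (p q : ℕ) :
    symAct A ((X 0 : MvPolynomial (Fin 2) K) ^ p * X 1 ^ q) =
      C (d ^ p * c ^ q) * (X 0 ^ q * X 1 ^ p) := by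
  subst hA
  rw [symAct, _root_.map_mul, map_pow, map_pow, aeval_X, aeval_X, Fin.sum_univ_two,
    Fin.sum_univ_two]
  norm_num [Matrix.cons_val_zero, Matrix.cons_val_one, Matrix.head_cons]
  rw [mul_pow, mul_pow]
  ring

/-- Auxiliary: cancel a common (monomial) factor against equal scalars. -/
lemma C_mul_congr {K : Type*} [Field K] {α β : K} (M : MvPolynomial (Fin 2) K)
    (h : α = β) : C α * M = C β * M := by rw [h]

/-- for `n = 2m` (`m ≥ 1`), the twist
`ρ_n = (Symⁿρ) ⊗ (det ρ)^(−m)` — whose action on a degree-`n` homogeneous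
polynomial `P` is `(det ρ(g))⁻¹^m • symAct (ρ(g)) P` — decomposes as
`θ^m ⊕ ⨁_{i=0}^{m-1} (Ind_H^G η^(2(m-i))) ⊗ θ^i (det ρ)^(i-m)`:
the line `K·x^m y^m` carries the character `θ^m`, and for each `i < m` the
plane spanned by `v i = x^(2m-i) y^i` and `v (n-i) = x^i y^(2m-i)`, via the
basis `(v i, v (n-i)) ↔ (e₀, e₁)`, carries
`(Ind_H^G η^(2(m-i))) ⊗ θ^i (det ρ)^(i-m)`. -/
theorem symPow_twist_decomposition
    {K : Type*} [Field K] [CharZero K] {G : Type*} [Group G]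
    (H : Subgroup G) (hH : H.index = 2) (τ : G) (hτ : τ ∉ H) (η : H →* Kˣ)
    (m : ℕ) (hm : 1 ≤ m) :
    ∀ g : G,
      (C (((indRep H η τ g).det)⁻¹ ^ m) *
          symAct (indRep H η τ g) (X 0 ^ m * X 1 ^ m) =
        C (thetaChar (K := K) H g ^ m) * (X 0 ^ m * X 1 ^ m)) ∧
      (∀ i : ℕ, i < m →
        (C (((indRep H η τ g).det)⁻¹ ^ m) *
            symAct (indRep H η τ g) (X 0 ^ (2 * m - i) * X 1 ^ i) =
          C (thetaChar (K := K) H g ^ i * ((indRep H η τ g).det)⁻¹ ^ (m - i)) *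
            (C (indRep H (η ^ (2 * (m - i))) τ g 0 0) *
                (X 0 ^ (2 * m - i) * X 1 ^ i) +
             C (indRep H (η ^ (2 * (m - i))) τ g 1 0) *
                (X 0 ^ i * X 1 ^ (2 * m - i)))) ∧
        (C (((indRep H η τ g).det)⁻¹ ^ m) *
            symAct (indRep H η τ g) (X 0 ^ i * X 1 ^ (2 * m - i)) =
          C (thetaChar (K := K) H g ^ i * ((indRep H η τ g).det)⁻¹ ^ (m - i)) *
            (C (indRep H (η ^ (2 * (m - i))) τ g 0 1) *
                (X 0 ^ (2 * m - i) * X 1 ^ i) +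
             C (indRep H (η ^ (2 * (m - i))) τ g 1 1) *
                (X 0 ^ i * X 1 ^ (2 * m - i))))) := by
  
  intro g
  by_cases hg : g ∈ H
  · -- the case g ∈ H : the matrix is diagonal
    have hτg : τ * g ∉ H := by
      rw [Subgroup.mul_mem_iff_of_index_two hH]
      simp [hg, hτ]
    have hτgτ : τ * g * τ⁻¹ ∈ H := by
      rw [Subgroup.mul_mem_iff_of_index_two hH, inv_mem_iff]
      simp [hτg, hτ]
    set a : K := ((η ⟨g, hg⟩ : Kˣ) : K) with ha_def
    set b : K := ((η ⟨τ * g * τ⁻¹, hτgτ⟩ : Kˣ) : K) with hb_def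
    have ha : a ≠ 0 := Units.ne_zero _
    have hb : b ≠ 0 := Units.ne_zero _
    have hA : indRep H η τ g = !![a, 0; 0, b] := by
      rw [indRep, if_pos hg, etaExt, etaExt, dif_pos hg, dif_pos hτgτ]
    have hdet : (indRep H η τ g).det = a * b := by
      rw [hA, Matrix.det_fin_two_of]; ring
    have hθ : thetaChar (K := K) H g = 1 := if_pos hg
    refine ⟨?_, ?_⟩
    · rw [symAct_diag a b _ hA, hdet, hθ]
      simp only [← C_mul, ← mul_assoc]
      congr 1
      congr 1
      try rw [C_inj]
      field_simp
      rw [← mul_pow, ← mul_pow]; congr 1; field_simp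
    · intro i hi
      obtain ⟨k, rfl⟩ : ∃ k, m = i + k := ⟨m - i, by omega⟩
      have hk : 0 < k := by omega
      have e1 : i + k - i = k := by omega
      have e2 : 2 * (i + k) - i = i + 2 * k := by omega
      have hI : indRep H (η ^ (2 * k)) τ g = !![a ^ (2 * k), 0; 0, b ^ (2 * k)] := by
        rw [indRep, if_pos hg, etaExt, etaExt, dif_pos hg, dif_pos hτgτ]
        norm_num [ha_def, hb_def, Units.val_pow_eq_pow_val]
        try exact ⟨rfl, rfl⟩
      rw [e1, e2, hI]
      constructor
      · rw [symAct_diag a b _ hA, hdet, hθ,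
          show (!![a ^ (2*k), 0; 0, b ^ (2*k)] : Matrix (Fin 2) (Fin 2) K) 0 0 = a ^ (2*k) from rfl,
          show (!![a ^ (2*k), 0; 0, b ^ (2*k)] : Matrix (Fin 2) (Fin 2) K) 1 0 = 0 from rfl,
          map_zero, zero_mul, add_zero]
        simp only [← C_mul, ← mul_assoc]
        congr 1
        congr 1
        try rw [C_inj]
        field_simp
        ring_nf; simp only [inv_pow]; field_simp
      · rw [symAct_diag a b _ hA, hdet, hθ,
          show (!![a ^ (2*k), 0; 0, b ^ (2*k)] : Matrix (Fin 2) (Fin 2) K) 0 1 = 0 from rfl,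
          show (!![a ^ (2*k), 0; 0, b ^ (2*k)] : Matrix (Fin 2) (Fin 2) K) 1 1 = b ^ (2*k) from rfl,
          map_zero, zero_mul, zero_add]
        simp only [← C_mul, ← mul_assoc]
        congr 1
        congr 1
        try rw [C_inj]
        field_simp
        ring_nf; simp only [inv_pow]; field_simp
  · -- the case g ∉ H : the matrix is antidiagonal
    have hτg : τ * g ∈ H := by
      rw [Subgroup.mul_mem_iff_of_index_two hH]
      simp [hg, hτ]
    have hgτ : g * τ⁻¹ ∈ H := by
      rw [Subgroup.mul_mem_iff_of_index_two hH, inv_mem_iff]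
      simp [hg, hτ]
    set c : K := ((η ⟨g * τ⁻¹, hgτ⟩ : Kˣ) : K) with hc_def
    set d : K := ((η ⟨τ * g, hτg⟩ : Kˣ) : K) with hd_def
    have hc : c ≠ 0 := Units.ne_zero _
    have hd : d ≠ 0 := Units.ne_zero _
    have hA : indRep H η τ g = !![0, c; d, 0] := by
      rw [indRep, if_neg hg, etaExt, etaExt, dif_pos hgτ, dif_pos hτg]
    have hdet : (indRep H η τ g).det = -(c * d) := by
      rw [hA, Matrix.det_fin_two_of]; ring
    have hθ : thetaChar (K := K) H g = -1 := if_neg hg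
    refine ⟨?_, ?_⟩
    · rw [symAct_antidiag c d _ hA, hdet, hθ]
      simp only [← C_mul, ← mul_assoc]
      congr 1
      congr 1
      try rw [C_inj]
      field_simp
      rw [← mul_pow, ← mul_pow]; congr 1; field_simp
    · intro i hi
      obtain ⟨k, rfl⟩ : ∃ k, m = i + k := ⟨m - i, by omega⟩
      have hk : 0 < k := by omega
      have e1 : i + k - i = k := by omega
      have e2 : 2 * (i + k) - i = i + 2 * k := by omega
      have hI : indRep H (η ^ (2 * k)) τ g = !![0, c ^ (2 * k); d ^ (2 * k), 0] := by
        rw [indRep, if_neg hg, etaExt, etaExt, dif_pos hgτ, dif_pos hτg]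
        norm_num [hc_def, hd_def, Units.val_pow_eq_pow_val]
        try exact ⟨rfl, rfl⟩
      rw [e1, e2, hI]
      constructor
      · rw [symAct_antidiag c d _ hA, hdet, hθ,
          show (!![0, c ^ (2*k); d ^ (2*k), 0] : Matrix (Fin 2) (Fin 2) K) 0 0 = 0 from rfl,
          show (!![0, c ^ (2*k); d ^ (2*k), 0] : Matrix (Fin 2) (Fin 2) K) 1 0 = d ^ (2*k) from rfl,
          map_zero, zero_mul, zero_add]
        simp only [← C_mul, ← mul_assoc]
        congr 1
        congr 1
        try rw [C_inj]
        field_simp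
        ring_nf
        simp only [inv_pow]; field_simp
      · rw [symAct_antidiag c d _ hA, hdet, hθ,
          show (!![0, c ^ (2*k); d ^ (2*k), 0] : Matrix (Fin 2) (Fin 2) K) 0 1 = c ^ (2*k) from rfl,
          show (!![0, c ^ (2*k); d ^ (2*k), 0] : Matrix (Fin 2) (Fin 2) K) 1 1 = 0 from rfl,
          map_zero, zero_mul, add_zero]
        simp only [← C_mul, ← mul_assoc]
        congr 1
        congr 1
        try rw [C_inj]
        field_simp
        ring_nf
        simp only [inv_pow]; field_simp
end

section
/- Suppose K is equipped with a valuation v : Kˣ → ℚ. Let D be a subgroup of G, and suppose there exist M ∈ GL₂(K) and characters χ₁, χ₂ : D → Kˣ such that for every d ∈ D the matrix M ρ(d) M⁻¹ is upper triangular with diagonal entries χ₁(d), χ₂(d). If there exists d₀ ∈ D with v(χ₁(d₀)) ≠ v(χ₂(d₀)), then D ⊆ H. (This encodes the fact that a p-ordinary newform with complex multiplication by an imaginary quadratic field F and level prime to p forces p to split in F: the decomposition group G_p, on which ρ_f is upper triangular with an unramified character δ of valuation 0 and a character of valuation k−1 > 0 on Frobenius, must lie in G_F.) -/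
open Matrix
open scoped Classical

/-- if on a subgroup `D ≤ G` the induced representation `ρ` can be
simultaneously conjugated (by some `M ∈ GL₂(K)`) into upper-triangular form
with diagonal characters `χ₁, χ₂ : D → Kˣ`, and some `d₀ ∈ D` has
`v(χ₁(d₀)) ≠ v(χ₂(d₀))` for a valuation `v : Kˣ → ℚ`, then `D ⊆ H`.
(This encodes that a `p`-ordinary CM newform of level prime to `p` forces `p`
to split in the CM field: the decomposition group must lie in `G_F`.) -/
theorem decomposition_group_in_CM_field
    {K : Type*} [Field K] [CharZero K] {G : Type*} [Group G]
    (H : Subgroup G) (hH : H.index = 2) (τ : G) (hτ : τ ∉ H) (η : H →* Kˣ)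
    (v : Kˣ → ℚ) (hv : ∀ x y : Kˣ, v (x * y) = v x + v y)
    (D : Subgroup G) (M : GL (Fin 2) K) (χ₁ χ₂ : D →* Kˣ)
    (htri : ∀ d : D,
      ((M : Matrix (Fin 2) (Fin 2) K) * indRep H η τ (d : G) *
          ((M⁻¹ : GL (Fin 2) K) : Matrix (Fin 2) (Fin 2) K)) 0 0 = (χ₁ d : K) ∧
      ((M : Matrix (Fin 2) (Fin 2) K) * indRep H η τ (d : G) *
          ((M⁻¹ : GL (Fin 2) K) : Matrix (Fin 2) (Fin 2) K)) 1 0 = 0 ∧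
      ((M : Matrix (Fin 2) (Fin 2) K) * indRep H η τ (d : G) *
          ((M⁻¹ : GL (Fin 2) K) : Matrix (Fin 2) (Fin 2) K)) 1 1 = (χ₂ d : K))
    (hd₀ : ∃ d₀ : D, v (χ₁ d₀) ≠ v (χ₂ d₀)) :
    D ≤ H := by
  obtain ⟨d₀, hd₀⟩ := hd₀
  -- basic valuation facts
  have h1 : v 1 = 0 := by have := hv 1 1; simp at this; linarith
  have hneg : ∀ x : Kˣ, v (-x) = v x := by
    intro x
    have hm1 : v (-1) = 0 := by
      have := hv (-1) (-1); simp [h1] at this; linarith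
    have h := hv (-1) x
    rw [neg_one_mul] at h
    rw [h, hm1, zero_add]
  -- key lemma: if d ∉ H then v (χ₁ d) = v (χ₂ d)
  have key : ∀ d : D, (d : G) ∉ H → v (χ₁ d) = v (χ₂ d) := by
    intro d hd
    obtain ⟨h00, h10, h11⟩ := htri d
    have htr0 : Matrix.trace (indRep H η τ (d : G)) = 0 := by
      unfold indRep
      rw [if_neg hd]
      simp [Matrix.trace_fin_two]
    have hinvmul : ((M⁻¹ : GL (Fin 2) K) : Matrix (Fin 2) (Fin 2) K) *
        (M : Matrix (Fin 2) (Fin 2) K) = 1 := Units.inv_mul M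
    have htrconj : Matrix.trace ((M : Matrix (Fin 2) (Fin 2) K) * indRep H η τ (d : G) *
        ((M⁻¹ : GL (Fin 2) K) : Matrix (Fin 2) (Fin 2) K)) = 0 := by
      rw [Matrix.trace_mul_comm, ← mul_assoc, hinvmul, one_mul, htr0]
    rw [Matrix.trace_fin_two, h00, h11] at htrconj
    have hsum : (χ₂ d : Kˣ) = -χ₁ d := by
      apply Units.ext
      rw [Units.val_neg]
      linear_combination htrconj
    rw [hsum, hneg]
  intro d hdD
  by_contra hdH
  set dd : D := ⟨d, hdD⟩ with hdd
  have hddH : (dd : G) ∉ H := hdH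
  by_cases hcase : (d₀ : G) ∈ H
  · -- then d₀ * dd ∉ H
    have hprod : ((d₀ * dd : D) : G) ∉ H := by
      intro hmem
      apply hddH
      have : (dd : G) = (d₀ : G)⁻¹ * ((d₀ * dd : D) : G) := by
        push_cast; group
      rw [this]
      exact H.mul_mem (H.inv_mem hcase) hmem
    have k1 := key (d₀ * dd) hprod
    have k2 := key dd hddH
    rw [_root_.map_mul, _root_.map_mul, hv, hv, k2] at k1
    exact hd₀ (by linarith)
  · exact hd₀ (key d₀ hcase)
end
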